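/- Let V be a 6-dimensional complex vector space, equipped with the symplectic form on ⋀³V given by (α, β) ↦ vol(α ∧ β) for a fixed isomorphism vol : ⋀⁶V ≅ ℂ. For each nonzero v ∈ V, the subspace F_v = {v ∧ α : α ∈ ⋀²V} of ⋀³V is isotropic of dimension 10, hence Lagrangian. -/

import Mathlib

open Module ExteriorAlgebra

/-- The ten pairs `(i, j)` with `1 ≤ i < j ≤ 5`. -/
def prPairs : Fin 10 → Fin 6 × Fin 6 :=
  ![(1,2),(1,3),(1,4),(1,5),(2,3),(2,4),(2,5),(3,4),(3,5),(4,5)]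

theorem prPairs0 : prPairs 0 = (1,2) := rfl
theorem prPairs1 : prPairs 1 = (1,3) := rfl
theorem prPairs2 : prPairs 2 = (1,4) := rfl
theorem prPairs3 : prPairs 3 = (1,5) := rfl
theorem prPairs4 : prPairs 4 = (2,3) := rfl
theorem prPairs5 : prPairs 5 = (2,4) := rfl
theorem prPairs6 : prPairs 6 = (2,5) := rfl
theorem prPairs7 : prPairs 7 = (3,4) := rfl
theorem prPairs8 : prPairs 8 = (3,5) := rfl
theorem prPairs9 : prPairs 9 = (4,5) := rfl

section Aux

variable {V : Type*} [AddCommGroup V] [Module ℂ V]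

/-- The ten candidate basis vectors `v ∧ eᵢ ∧ eⱼ` of `F_v`. -/
noncomputable def ggen (e : Basis (Fin 6) ℂ V) (k : Fin 10) : ExteriorAlgebra ℂ V :=
  ι ℂ (e 0) * (ι ℂ (e (prPairs k).1) * ι ℂ (e (prPairs k).2))

/-- The alternating 3-form `x ∧ y ∧ z ↦ det (coords 0, a, b)`. -/
noncomputable def dd3 (e : Basis (Fin 6) ℂ V) (a b : Fin 6) : V [⋀^Fin 3]→ₗ[ℂ] ℂ :=
  ((Pi.basisFun ℂ (Fin 3)).det).compLinearMap
    (LinearMap.pi ![e.coord 0, e.coord a, e.coord b])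

theorem dd3_eval (e : Basis (Fin 6) ℂ V) (a b c d : Fin 6) (ha : a ≠ 0) (hb : b ≠ 0)
    (hc : c ≠ 0) (hd : d ≠ 0) :
    dd3 e a b ![e 0, e c, e d] =
      ((if d = b then if c = a then (1:ℂ) else 0 else 0)
        - if d = a then if c = b then (1:ℂ) else 0 else 0) := by
  simp [dd3, Basis.det_apply, Matrix.det_fin_three,
      Basis.toMatrix_apply, Basis.coord_apply, Basis.repr_self, Finsupp.single_apply,
      LinearMap.pi_apply, ha, hb, hc, hd, Ne.symm ha, Ne.symm hb, Ne.symm hc, Ne.symm hd,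
      eq_comm (a := (0:Fin 6)), -Pi.basisFun_det]
  split_ifs <;> rfl

theorem dd3_eval' (e : Basis (Fin 6) ℂ V) (k l : Fin 10) :
    dd3 e (prPairs k).1 (prPairs k).2 ![e 0, e (prPairs l).1, e (prPairs l).2] =
      if k = l then 1 else 0 := by
  fin_cases k <;> fin_cases l <;>
    simp [prPairs0, prPairs1, prPairs2, prPairs3, prPairs4, prPairs5, prPairs6, prPairs7,
      prPairs8, prPairs9, dd3_eval]

theorem triple_eq_iMulti (x y z : V) :
    ιMulti ℂ 3 ![x, y, z] = ι ℂ x * (ι ℂ y * ι ℂ z) := by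
  rw [ιMulti_apply]
  simp [List.ofFn_succ, mul_assoc]

/-- `ggen e` is linearly independent. -/
theorem ggen_linearIndependent (e : Basis (Fin 6) ℂ V) :
    LinearIndependent ℂ (ggen e) := by
  rw [Fintype.linearIndependent_iff]
  intro c hc k
  have hFc := congrArg (liftAlternating
      (Pi.single (M := fun i => V [⋀^Fin i]→ₗ[ℂ] ℂ) 3 (dd3 e (prPairs k).1 (prPairs k).2))) hc
  rw [map_sum, map_zero] at hFc
  have heval : ∀ l : Fin 10,
      (liftAlternating
        (Pi.single (M := fun i => V [⋀^Fin i]→ₗ[ℂ] ℂ) 3 (dd3 e (prPairs k).1 (prPairs k).2)))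
        (ggen e l) = if k = l then 1 else 0 := by
    intro l
    rw [ggen, ← triple_eq_iMulti, liftAlternating_apply_ιMulti, Pi.single_eq_same,
      dd3_eval']
  simp only [map_smul, heval, smul_eq_mul, mul_ite, mul_one, mul_zero,
    Finset.sum_ite_eq, Finset.mem_univ, if_true] at hFc
  exact hFc

theorem swap_ι (x y : V) : ι ℂ x * ι ℂ y = -(ι ℂ y * ι ℂ x) := by
  rw [eq_neg_iff_add_eq_zero, ι_add_mul_swap]

theorem triple_mem_span (e : Basis (Fin 6) ℂ V) (i j : Fin 6) :
    ι ℂ (e 0) * (ι ℂ (e i) * ι ℂ (e j)) ∈ Submodule.span ℂ (Set.range (ggen e)) := by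
  have z1 : ∀ y : V, ι ℂ (e 0) * (ι ℂ (e 0) * ι ℂ y) = 0 := fun y => by
    rw [← mul_assoc, ι_sq_zero, zero_mul]
  have z2 : ∀ y : V, ι ℂ (e 0) * (ι ℂ y * ι ℂ (e 0)) = 0 := fun y => by
    rw [swap_ι y (e 0), mul_neg, z1, neg_zero]
  have z3 : ∀ y : V, ι ℂ (e 0) * (ι ℂ y * ι ℂ y) = 0 := fun y => by
    rw [ι_sq_zero, mul_zero]
  have hneg : ∀ a b : Fin 6, ι ℂ (e 0) * (ι ℂ (e a) * ι ℂ (e b)) =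
      -(ι ℂ (e 0) * (ι ℂ (e b) * ι ℂ (e a))) := fun a b => by
    rw [swap_ι (e a) (e b), mul_neg]
  fin_cases i <;> fin_cases j <;> simp only [Fin.zero_eta] <;>
    first
      | (rw [z1]; exact zero_mem _)
      | (rw [z2]; exact zero_mem _)
      | (rw [z3]; exact zero_mem _)
      | exact Submodule.subset_span ⟨0, rfl⟩
      | exact Submodule.subset_span ⟨1, rfl⟩
      | exact Submodule.subset_span ⟨2, rfl⟩
      | exact Submodule.subset_span ⟨3, rfl⟩
      | exact Submodule.subset_span ⟨4, rfl⟩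
      | exact Submodule.subset_span ⟨5, rfl⟩
      | exact Submodule.subset_span ⟨6, rfl⟩
      | exact Submodule.subset_span ⟨7, rfl⟩
      | exact Submodule.subset_span ⟨8, rfl⟩
      | exact Submodule.subset_span ⟨9, rfl⟩
      | (rw [hneg]
         first
           | exact neg_mem (Submodule.subset_span ⟨0, rfl⟩)
           | exact neg_mem (Submodule.subset_span ⟨1, rfl⟩)
           | exact neg_mem (Submodule.subset_span ⟨2, rfl⟩)
           | exact neg_mem (Submodule.subset_span ⟨3, rfl⟩)
           | exact neg_mem (Submodule.subset_span ⟨4, rfl⟩)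
           | exact neg_mem (Submodule.subset_span ⟨5, rfl⟩)
           | exact neg_mem (Submodule.subset_span ⟨6, rfl⟩)
           | exact neg_mem (Submodule.subset_span ⟨7, rfl⟩)
           | exact neg_mem (Submodule.subset_span ⟨8, rfl⟩)
           | exact neg_mem (Submodule.subset_span ⟨9, rfl⟩))

/-- `F_v` equals the span of the ten generators. -/
theorem map_eq_span (e : Basis (Fin 6) ℂ V) :
    (⋀[ℂ]^2 V : Submodule ℂ (ExteriorAlgebra ℂ V)).map
      (LinearMap.mulLeft ℂ (ExteriorAlgebra.ι ℂ (e 0)))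
      = Submodule.span ℂ (Set.range (ggen e)) := by
  apply le_antisymm
  · rintro _ ⟨a, ha, rfl⟩
    rw [LinearMap.mulLeft_apply]
    rw [show (⋀[ℂ]^2 V : Submodule ℂ (ExteriorAlgebra ℂ V)) =
        LinearMap.range (ι ℂ (M := V)) * LinearMap.range (ι ℂ (M := V)) from pow_two _] at ha
    refine Submodule.mul_induction_on ha (fun x' hx y' hy => ?_) (fun x y ihx ihy => ?_)
    · obtain ⟨x, rfl⟩ := hx
      obtain ⟨y, rfl⟩ := hy
      rw [← e.sum_repr x, ← e.sum_repr y]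
      rw [map_sum, map_sum, Finset.sum_mul, Finset.mul_sum]
      refine Submodule.sum_mem _ fun i _ => ?_
      rw [Finset.mul_sum, Finset.mul_sum]
      refine Submodule.sum_mem _ fun j _ => ?_
      simp only [map_smul, smul_mul_assoc, mul_smul_comm, smul_smul]
      exact Submodule.smul_mem _ _ (triple_mem_span e i j)
    · rw [mul_add]
      exact add_mem ihx ihy
  · rw [Submodule.span_le]
    rintro _ ⟨k, rfl⟩
    refine ⟨ι ℂ (e (prPairs k).1) * ι ℂ (e (prPairs k).2), ?_, rfl⟩
    rw [show (⋀[ℂ]^2 V : Submodule ℂ (ExteriorAlgebra ℂ V)) =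
        LinearMap.range (ι ℂ (M := V)) * LinearMap.range (ι ℂ (M := V)) from pow_two _]
    exact Submodule.mul_mem_mul (LinearMap.mem_range_self _ _) (LinearMap.mem_range_self _ _)

theorem commute_deg2 (v : V) (x : ExteriorAlgebra ℂ V)
    (hx : x ∈ (⋀[ℂ]^2 V : Submodule ℂ (ExteriorAlgebra ℂ V))) :
    ι ℂ v * x = x * ι ℂ v := by
  rw [show (⋀[ℂ]^2 V : Submodule ℂ (ExteriorAlgebra ℂ V)) =
      LinearMap.range (ι ℂ (M := V)) * LinearMap.range (ι ℂ (M := V)) from pow_two _] at hx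
  refine Submodule.mul_induction_on hx (fun a' ha b' hb => ?_) (fun a b ih1 ih2 => ?_)
  · obtain ⟨a, rfl⟩ := ha
    obtain ⟨b, rfl⟩ := hb
    rw [← mul_assoc, swap_ι v a, neg_mul, mul_assoc, swap_ι v b, mul_neg, neg_neg, mul_assoc]
  · rw [mul_add, add_mul, ih1, ih2]

end Aux

/-- For a 6-dimensional complex vector space `V` with a fixed isomorphism
`vol : ⋀⁶V ≅ ℂ` inducing the symplectic form `(α, β) ↦ vol (α ∧ β)` on `⋀³V`,
and any nonzero `v ∈ V`, the subspace `F_v = v ∧ ⋀²V` of `⋀³V` is isotropic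
of dimension `10`, hence Lagrangian. -/
theorem statement0 (V : Type*) [AddCommGroup V] [Module ℂ V] [FiniteDimensional ℂ V]
    (hV : finrank ℂ V = 6)
    (vol : (⋀[ℂ]^6 V : Submodule ℂ (ExteriorAlgebra ℂ V)) ≃ₗ[ℂ] ℂ)
    (v : V) (hv : v ≠ 0)
    (Fv : Submodule ℂ (ExteriorAlgebra ℂ V))
    (hFv : Fv = (⋀[ℂ]^2 V : Submodule ℂ (ExteriorAlgebra ℂ V)).map
      (LinearMap.mulLeft ℂ (ExteriorAlgebra.ι ℂ v))) :
    Fv ≤ (⋀[ℂ]^3 V : Submodule ℂ (ExteriorAlgebra ℂ V)) ∧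
    finrank ℂ Fv = 10 ∧
    (∀ α ∈ Fv, ∀ β ∈ Fv,
      ∀ h : α * β ∈ (⋀[ℂ]^6 V : Submodule ℂ (ExteriorAlgebra ℂ V)),
        vol ⟨α * β, h⟩ = 0) := by
  -- construct a basis `e` with `e 0 = v`
  have hli : LinearIndepOn ℂ id ({v} : Set V) :=
    (linearIndepOn_singleton_iff ℂ).mpr hv
  let b := Basis.extend hli
  haveI : Fintype (hli.extend (Set.subset_univ {v})) := FiniteDimensional.fintypeBasisIndex b
  have hcard : Fintype.card (hli.extend (Set.subset_univ {v})) = 6 := by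
    rw [← finrank_eq_card_basis b, hV]
  have hvmem : v ∈ hli.extend (Set.subset_univ {v}) :=
    hli.subset_extend _ rfl
  let σ := Fintype.equivFinOfCardEq hcard
  let e : Basis (Fin 6) ℂ V := b.reindex (σ.trans (Equiv.swap (σ ⟨v, hvmem⟩) 0))
  have he0 : e 0 = v := by
    simp only [e, Basis.reindex_apply, Equiv.symm_trans_apply, Equiv.symm_swap,
      Equiv.swap_apply_right, Equiv.symm_apply_apply]
    exact Basis.extend_apply_self hli ⟨v, hvmem⟩
  rw [← he0] at hFv
  refine ⟨?_, ?_, ?_⟩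
  · -- Fv ≤ ⋀³
    rw [hFv]
    rintro _ ⟨a, ha, rfl⟩
    rw [LinearMap.mulLeft_apply]
    rw [show (⋀[ℂ]^3 V : Submodule ℂ (ExteriorAlgebra ℂ V)) =
        LinearMap.range (ι ℂ (M := V)) * (⋀[ℂ]^2 V : Submodule ℂ (ExteriorAlgebra ℂ V)) from
      by rw [← pow_succ']]
    exact Submodule.mul_mem_mul (LinearMap.mem_range_self _ _) ha
  · -- dimension 10
    rw [hFv, map_eq_span e, finrank_span_eq_card (ggen_linearIndependent e), Fintype.card_fin]
  · -- isotropic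
    intro α hα β hβ h
    rw [hFv] at hα hβ
    obtain ⟨a, ha, rfl⟩ := hα
    obtain ⟨c, hc, rfl⟩ := hβ
    have hzero : (LinearMap.mulLeft ℂ (ι ℂ (e 0))) a * (LinearMap.mulLeft ℂ (ι ℂ (e 0))) c
        = 0 := by
      rw [LinearMap.mulLeft_apply, LinearMap.mulLeft_apply, ← mul_assoc, mul_assoc (ι ℂ (e 0)),
        ← commute_deg2 (e 0) a ha, ← mul_assoc, ι_sq_zero, zero_mul, zero_mul]
    have : (⟨_, h⟩ : (⋀[ℂ]^6 V : Submodule ℂ (ExteriorAlgebra ℂ V))) = 0 :=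
      Subtype.ext hzero
    rw [this, map_zero]
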